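/- Define U_0(y)=y^3, V_0(y)=y^{-1}, and recursively U_n = U_{n-1}^3 + 3 U_{n-1} V_{n-1}^2 + 4 V_{n-1}^3, V_n = U_{n-1}^2 V_{n-1} + 4 U_{n-1} V_{n-1}^2 + 3 V_{n-1}^3. Then for every natural number n, y^{3^n} U_n(y) and y^{3^n} V_n(y) are polynomials in y^4 with integer coefficients. -/
import Mathlib


noncomputable def UV : ℕ → ((ℂ → ℂ) × (ℂ → ℂ))
  | 0 => (fun y => y ^ 3, fun y => y⁻¹)
  | n + 1 =>
    (fun y => (UV n).1 y ^ 3 + 3 * (UV n).1 y * (UV n).2 y ^ 2 + 4 * (UV n).2 y ^ 3,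
     fun y => (UV n).1 y ^ 2 * (UV n).2 y + 4 * (UV n).1 y * (UV n).2 y ^ 2
       + 3 * (UV n).2 y ^ 3)

theorem stmt0 (n : ℕ) :
    ∃ P Q : Polynomial ℤ,
      (∀ y : ℂ, y ≠ 0 → y ^ (3 ^ n) * (UV n).1 y = Polynomial.aeval (y ^ 4) P) ∧
      (∀ y : ℂ, y ≠ 0 → y ^ (3 ^ n) * (UV n).2 y = Polynomial.aeval (y ^ 4) Q) := by
  induction n with
  | zero =>
    refine ⟨Polynomial.X, 1, fun y hy => ?_, fun y hy => ?_⟩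
    · simp [UV]; ring
    · simp [UV, mul_inv_cancel₀ hy]
  | succ n ih =>
    obtain ⟨P, Q, hP, hQ⟩ := ih
    refine ⟨P ^ 3 + 3 * P * Q ^ 2 + 4 * Q ^ 3,
      P ^ 2 * Q + 4 * P * Q ^ 2 + 3 * Q ^ 3, fun y hy => ?_, fun y hy => ?_⟩ <;>
    · have h1 := hP y hy
      have h2 := hQ y hy
      simp only [UV, map_add, map_mul, map_pow, map_ofNat]
      rw [show 3 ^ (n + 1) = 3 ^ n * 3 from pow_succ 3 n, pow_mul, ← h1, ← h2]
      ring
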